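/- For the Frank–Wolfe iterates, define E(t_j) = a_{t_j} F(x(t_j)) − √a_{t_j} F(x*) where √a_{t_j} = e^{t_j/(1+t_j)}. If E(t_j) ≤ 0, then E(t_{j+1}) − E(t_j) ≥ −(nL/2)(√a_{t_{j+1}} − √a_{t_j})². -/

import Mathlib

/-- The harmonic number `H j = ∑_{k=1}^j 1/k` (with `H 0 = 0`). -/
noncomputable def harmonicNum (j : ℕ) : ℝ := ∑ k ∈ Finset.range j, (1 : ℝ) / (k + 1)

/-- `H_{2,j} = ∑_{k=1}^j 1/k²`. -/
noncomputable def harmonicNum2 (j : ℕ) : ℝ := ∑ k ∈ Finset.range j, (1 : ℝ) / ((k : ℝ) + 1) ^ 2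

/-- The time values `t_j = 1/(1 - ln(1 + H_j/H_T)) - 1` of the Frank–Wolfe algorithm. -/
noncomputable def fwTime (T j : ℕ) : ℝ :=
  1 / (1 - Real.log (1 + harmonicNum j / harmonicNum T)) - 1

/-- The Frank–Wolfe step ratio `e^{-1/(1+t_j) + 1/(1+t_{j+1})}`. -/
noncomputable def fwRatio (T j : ℕ) : ℝ :=
  Real.exp (-(1 / (1 + fwTime T j)) + 1 / (1 + fwTime T (j + 1)))

/-- `√a_{t_j} = e^{t_j/(1+t_j)}`. -/
noncomputable def fwSqa (T j : ℕ) : ℝ := Real.exp (fwTime T j / (1 + fwTime T j))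

/-- `F : [0,1]^n → ℝ` is DR-submodular: for all `x ≤ y` in `[0,1]^n`, coordinates `i` and
`a > 0` with `x + a·e_i, y + a·e_i ∈ [0,1]^n`, one has
`F(x + a·e_i) - F(x) ≥ F(y + a·e_i) - F(y)`. -/
def DRSubmodular {n : ℕ} (F : (Fin n → ℝ) → ℝ) : Prop :=
  ∀ x y : Fin n → ℝ, x ∈ Set.Icc (0 : Fin n → ℝ) 1 → y ∈ Set.Icc (0 : Fin n → ℝ) 1 →
    x ≤ y → ∀ i : Fin n, ∀ a : ℝ, 0 < a →
      x + a • (Pi.single i 1 : Fin n → ℝ) ∈ Set.Icc (0 : Fin n → ℝ) 1 →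
      y + a • (Pi.single i 1 : Fin n → ℝ) ∈ Set.Icc (0 : Fin n → ℝ) 1 →
      F (y + a • (Pi.single i 1 : Fin n → ℝ)) - F y ≤
        F (x + a • (Pi.single i 1 : Fin n → ℝ)) - F x

/-- The continuous linear map `y ↦ ⟨g, y⟩ = ∑ i, g i * y i` on `ℝⁿ`. -/
noncomputable def gradCLM {n : ℕ} (g : Fin n → ℝ) : (Fin n → ℝ) →L[ℝ] ℝ :=
  ∑ i, g i • (ContinuousLinearMap.proj i : (Fin n → ℝ) →L[ℝ] ℝ)

/-- `gradF` is the gradient of `F` on the box `[0,1]^n`: at each point of the box, `F` is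
differentiable within the box with derivative `y ↦ ⟨gradF z, y⟩`. -/
def HasGradientOnBox {n : ℕ} (F : (Fin n → ℝ) → ℝ) (gradF : (Fin n → ℝ) → Fin n → ℝ) : Prop :=
  ∀ z ∈ Set.Icc (0 : Fin n → ℝ) 1, HasFDerivWithinAt F (gradCLM (gradF z)) (Set.Icc 0 1) z


open Set Filter

variable {n : ℕ} {F : (Fin n → ℝ) → ℝ} {gradF : (Fin n → ℝ) → Fin n → ℝ}

lemma gradCLM_apply (g y : Fin n → ℝ) : gradCLM g y = ∑ i, g i * y i := by
  simp [gradCLM]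

lemma gradCLM_single (g : Fin n → ℝ) (i : Fin n) : gradCLM g (Pi.single i 1) = g i := by
  rw [gradCLM_apply]
  simp [Pi.single_apply]

lemma mem_box_iff {p : Fin n → ℝ} :
    p ∈ Set.Icc (0 : Fin n → ℝ) 1 ↔ ∀ i, 0 ≤ p i ∧ p i ≤ 1 := by
  simp [Set.mem_Icc, Pi.le_def, forall_and]

/-- Right directional derivative limit. -/
lemma dirDeriv_up (hgrad : HasGradientOnBox F gradF) {p : Fin n → ℝ}
    (hp : p ∈ Set.Icc (0 : Fin n → ℝ) 1) (i : Fin n) (hpi : p i < 1) :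
    Tendsto (fun a : ℝ => (F (p + a • (Pi.single i 1 : Fin n → ℝ)) - F p) / a)
      (nhdsWithin 0 (Set.Ioi 0)) (nhds (gradF p i)) := by
  set ψ : ℝ → Fin n → ℝ := fun a => p + a • (Pi.single i 1 : Fin n → ℝ) with hψ
  have hψd : ∀ a : ℝ, HasDerivAt ψ (Pi.single i 1 : Fin n → ℝ) a := by
    intro a
    have h1 : HasDerivAt (fun a : ℝ => a • (Pi.single i 1 : Fin n → ℝ))
        (Pi.single i 1 : Fin n → ℝ) a := by
      simpa using (hasDerivAt_id a).smul_const (Pi.single i 1 : Fin n → ℝ)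
    simpa [hψ] using h1.const_add p
  have hmaps : Set.MapsTo ψ (Set.Icc 0 (1 - p i)) (Set.Icc (0 : Fin n → ℝ) 1) := by
    intro a ha
    rw [mem_box_iff]
    intro j
    rcases mem_box_iff.1 hp j with ⟨h0, h1⟩
    rcases ha with ⟨ha0, ha1⟩
    by_cases hij : j = i
    · subst hij
      simp only [hψ, Pi.add_apply, Pi.smul_apply, Pi.single_eq_same, smul_eq_mul, mul_one]
      constructor <;> linarith
    · simp only [hψ, Pi.add_apply, Pi.smul_apply, Pi.single_eq_of_ne hij, smul_eq_mul, mul_zero,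
        add_zero]
      exact ⟨h0, h1⟩
  have hcomp : HasDerivWithinAt (fun a => F (ψ a)) (gradF p i) (Set.Icc 0 (1 - p i)) 0 := by
    have h0 : ψ 0 = p := by simp [hψ]
    have hFd : HasFDerivWithinAt F (gradCLM (gradF p)) (Set.Icc 0 1) (ψ 0) := by
      rw [h0]; exact hgrad p hp
    have := hFd.comp_hasDerivWithinAt (x := (0:ℝ)) ((hψd 0).hasDerivWithinAt) hmaps
    rw [gradCLM_single] at this; exact this
  have hslope := hasDerivWithinAt_iff_tendsto_slope.1 hcomp
  have hset : Set.Icc (0:ℝ) (1 - p i) \ {0} = Set.Ioc 0 (1 - p i) := by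
    ext a
    simp only [Set.mem_diff, Set.mem_Icc, Set.mem_singleton_iff, Set.mem_Ioc]
    constructor
    · rintro ⟨⟨h1, h2⟩, h3⟩; exact ⟨lt_of_le_of_ne h1 (Ne.symm h3), h2⟩
    · rintro ⟨h1, h2⟩; exact ⟨⟨h1.le, h2⟩, h1.ne'⟩
  rw [hset, nhdsWithin_Ioc_eq_nhdsGT (by linarith : (0:ℝ) < 1 - p i)] at hslope
  refine hslope.congr fun a => ?_
  have h0 : ψ 0 = p := by simp [hψ]
  simp [slope_def_field, h0, hψ]

/-- Left directional derivative limit. -/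
lemma dirDeriv_down (hgrad : HasGradientOnBox F gradF) {p : Fin n → ℝ}
    (hp : p ∈ Set.Icc (0 : Fin n → ℝ) 1) (i : Fin n) (hpi : 0 < p i) :
    Tendsto (fun a : ℝ => (F p - F (p + (-a) • (Pi.single i 1 : Fin n → ℝ))) / a)
      (nhdsWithin 0 (Set.Ioi 0)) (nhds (gradF p i)) := by
  set ψ : ℝ → Fin n → ℝ := fun a => p + a • (Pi.single i 1 : Fin n → ℝ) with hψ
  have hψd : ∀ a : ℝ, HasDerivAt ψ (Pi.single i 1 : Fin n → ℝ) a := by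
    intro a
    have h1 : HasDerivAt (fun a : ℝ => a • (Pi.single i 1 : Fin n → ℝ))
        (Pi.single i 1 : Fin n → ℝ) a := by
      simpa using (hasDerivAt_id a).smul_const (Pi.single i 1 : Fin n → ℝ)
    simpa [hψ] using h1.const_add p
  have hmaps : Set.MapsTo ψ (Set.Icc (-(p i)) 0) (Set.Icc (0 : Fin n → ℝ) 1) := by
    intro a ha
    rw [mem_box_iff]
    intro j
    rcases mem_box_iff.1 hp j with ⟨h0, h1⟩
    rcases ha with ⟨ha0, ha1⟩
    by_cases hij : j = i
    · subst hij
      simp only [hψ, Pi.add_apply, Pi.smul_apply, Pi.single_eq_same, smul_eq_mul, mul_one]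
      constructor <;> linarith
    · simp only [hψ, Pi.add_apply, Pi.smul_apply, Pi.single_eq_of_ne hij, smul_eq_mul, mul_zero,
        add_zero]
      exact ⟨h0, h1⟩
  have h0 : ψ 0 = p := by simp [hψ]
  have hcomp : HasDerivWithinAt (fun a => F (ψ a)) (gradF p i) (Set.Icc (-(p i)) 0) 0 := by
    have hFd : HasFDerivWithinAt F (gradCLM (gradF p)) (Set.Icc 0 1) (ψ 0) := by
      rw [h0]; exact hgrad p hp
    have := hFd.comp_hasDerivWithinAt (x := (0:ℝ)) ((hψd 0).hasDerivWithinAt) hmaps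
    rw [gradCLM_single] at this; exact this
  have hslope := hasDerivWithinAt_iff_tendsto_slope.1 hcomp
  have hset : Set.Icc (-(p i)) (0:ℝ) \ {0} = Set.Ico (-(p i)) 0 := by
    ext a
    simp only [Set.mem_diff, Set.mem_Icc, Set.mem_singleton_iff, Set.mem_Ico]
    constructor
    · rintro ⟨⟨h1, h2⟩, h3⟩; exact ⟨h1, lt_of_le_of_ne h2 h3⟩
    · rintro ⟨h1, h2⟩; exact ⟨⟨h1, h2.le⟩, h2.ne⟩
  rw [hset, nhdsWithin_Ico_eq_nhdsLT (by linarith : -(p i) < (0:ℝ))] at hslope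
  have hneg : Tendsto (fun a : ℝ => -a) (nhdsWithin 0 (Set.Ioi 0)) (nhdsWithin 0 (Set.Iio 0)) := by
    apply tendsto_nhdsWithin_of_tendsto_nhds_of_eventually_within
    · simpa using (continuous_neg.tendsto (0:ℝ)).mono_left nhdsWithin_le_nhds
    · filter_upwards [self_mem_nhdsWithin] with a (ha : a ∈ Set.Ioi 0)
      simpa using ha
  have := hslope.comp hneg
  refine this.congr fun a => ?_
  simp only [Function.comp, slope_def_field, h0]
  ring

lemma box_shift_up {p : Fin n → ℝ} (hp : p ∈ Set.Icc (0 : Fin n → ℝ) 1) (i : Fin n)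
    {a : ℝ} (ha : 0 ≤ a) (hpa : p i + a ≤ 1) :
    p + a • (Pi.single i 1 : Fin n → ℝ) ∈ Set.Icc (0 : Fin n → ℝ) 1 := by
  rw [mem_box_iff]
  intro j
  rcases mem_box_iff.1 hp j with ⟨h0, h1⟩
  by_cases hij : j = i
  · subst hij
    simp only [Pi.add_apply, Pi.smul_apply, Pi.single_eq_same, smul_eq_mul, mul_one]
    constructor <;> linarith
  · simp only [Pi.add_apply, Pi.smul_apply, Pi.single_eq_of_ne hij, smul_eq_mul, mul_zero,
      add_zero]
    exact ⟨h0, h1⟩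


lemma cancel_neg_smul (p : Fin n → ℝ) (a : ℝ) (c : Fin n → ℝ) :
    p + (-a) • c + a • c = p := by
  ext j; simp only [Pi.add_apply, Pi.smul_apply, smul_eq_mul]; ring

/-- The gradient of a DR-submodular function is antitone. -/
lemma grad_antitone (hDR : DRSubmodular F) (hgrad : HasGradientOnBox F gradF)
    {z w : Fin n → ℝ} (hz : z ∈ Set.Icc (0 : Fin n → ℝ) 1)
    (hw : w ∈ Set.Icc (0 : Fin n → ℝ) 1) (hzw : z ≤ w) (i : Fin n) :
    gradF w i ≤ gradF z i := by
  rcases lt_or_eq_of_le (mem_box_iff.1 hw i).2 with hwi | hwi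
  · -- w i < 1 : compare right difference quotients
    have hzi : z i < 1 := lt_of_le_of_lt (hzw i) hwi
    refine le_of_tendsto_of_tendsto (dirDeriv_up hgrad hw i hwi) (dirDeriv_up hgrad hz i hzi) ?_
    filter_upwards [Ioo_mem_nhdsGT_of_mem (Set.left_mem_Ico.2 (by linarith : (0:ℝ) < 1 - w i))]
      with a ha
    rcases ha with ⟨ha0, ha1⟩
    have h1 := hDR z w hz hw hzw i a ha0
      (box_shift_up hz i ha0.le (by linarith [hzw i]))
      (box_shift_up hw i ha0.le (by linarith))
    exact (div_le_div_iff_of_pos_right ha0).2 h1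
  · rcases lt_or_eq_of_le (mem_box_iff.1 hz i).1 with hzi | hzi
    · -- 0 < z i : compare left difference quotients
      have hwi0 : 0 < w i := lt_of_lt_of_le hzi (hzw i)
      refine le_of_tendsto_of_tendsto (dirDeriv_down hgrad hw i hwi0)
        (dirDeriv_down hgrad hz i hzi) ?_
      filter_upwards [Ioo_mem_nhdsGT_of_mem (Set.left_mem_Ico.2 hzi)] with a ha
      rcases ha with ⟨ha0, ha1⟩
      have hz' : z + (-a) • (Pi.single i 1 : Fin n → ℝ) ∈ Set.Icc (0 : Fin n → ℝ) 1 := by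
        rw [mem_box_iff]; intro j
        rcases mem_box_iff.1 hz j with ⟨h0, h1⟩
        by_cases hij : j = i
        · subst hij
          simp only [Pi.add_apply, Pi.smul_apply, Pi.single_eq_same, smul_eq_mul, mul_one]
          constructor <;> linarith
        · simp only [Pi.add_apply, Pi.smul_apply, Pi.single_eq_of_ne hij, smul_eq_mul, mul_zero,
            add_zero]
          exact ⟨h0, h1⟩
      have hw' : w + (-a) • (Pi.single i 1 : Fin n → ℝ) ∈ Set.Icc (0 : Fin n → ℝ) 1 := by
        rw [mem_box_iff]; intro j
        rcases mem_box_iff.1 hw j with ⟨h0, h1⟩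
        by_cases hij : j = i
        · subst hij
          simp only [Pi.add_apply, Pi.smul_apply, Pi.single_eq_same, smul_eq_mul, mul_one]
          constructor <;> linarith [hzw j]
        · simp only [Pi.add_apply, Pi.smul_apply, Pi.single_eq_of_ne hij, smul_eq_mul, mul_zero,
            add_zero]
          exact ⟨h0, h1⟩
      have hle : z + (-a) • (Pi.single i 1 : Fin n → ℝ) ≤ w + (-a) • (Pi.single i 1 : Fin n → ℝ) :=
        fun j => add_le_add_left (hzw j) _
      have h1 := hDR _ _ hz' hw' hle i a ha0
        (by rw [cancel_neg_smul]; exact hz) (by rw [cancel_neg_smul]; exact hw)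
      rw [cancel_neg_smul, cancel_neg_smul] at h1
      exact (div_le_div_iff_of_pos_right ha0).2 h1
    · -- w i = 1, z i = 0 : mixed quotients
      have hwi0 : (0:ℝ) < w i := by rw [hwi]; norm_num
      have hzi1 : z i < 1 := by rw [← hzi]; norm_num
      refine le_of_tendsto_of_tendsto (dirDeriv_down hgrad hw i hwi0)
        (dirDeriv_up hgrad hz i hzi1) ?_
      filter_upwards [Ioo_mem_nhdsGT_of_mem (Set.left_mem_Ico.2 one_pos)] with a ha
      rcases ha with ⟨ha0, ha1⟩
      have hw' : w + (-a) • (Pi.single i 1 : Fin n → ℝ) ∈ Set.Icc (0 : Fin n → ℝ) 1 := by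
        rw [mem_box_iff]; intro j
        rcases mem_box_iff.1 hw j with ⟨h0, h1⟩
        by_cases hij : j = i
        · subst hij
          simp only [Pi.add_apply, Pi.smul_apply, Pi.single_eq_same, smul_eq_mul, mul_one]
          constructor <;> linarith [hwi]
        · simp only [Pi.add_apply, Pi.smul_apply, Pi.single_eq_of_ne hij, smul_eq_mul, mul_zero,
            add_zero]
          exact ⟨h0, h1⟩
      have hle : z ≤ w + (-a) • (Pi.single i 1 : Fin n → ℝ) := by
        intro j
        by_cases hij : j = i
        · subst hij
          simp only [Pi.add_apply, Pi.smul_apply, Pi.single_eq_same, smul_eq_mul, mul_one]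
          linarith [hwi, hzi]
        · simp only [Pi.add_apply, Pi.smul_apply, Pi.single_eq_of_ne hij, smul_eq_mul, mul_zero,
            add_zero]
          exact hzw j
      have h1 := hDR _ _ hz hw' hle i a ha0
        (box_shift_up hz i ha0.le (by linarith [hzi]))
        (by rw [cancel_neg_smul]; exact hw)
      rw [cancel_neg_smul] at h1
      exact (div_le_div_iff_of_pos_right ha0).2 h1

lemma seg_mem {x y : Fin n → ℝ} (hx : x ∈ Set.Icc (0 : Fin n → ℝ) 1)
    (hy : y ∈ Set.Icc (0 : Fin n → ℝ) 1) (hxy : x ≤ y) {s : ℝ} (hs : s ∈ Set.Icc (0:ℝ) 1) :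
    x + s • (y - x) ∈ Set.Icc (0 : Fin n → ℝ) 1 := by
  rw [mem_box_iff]; intro j
  rcases mem_box_iff.1 hx j with ⟨h0, h1⟩
  rcases mem_box_iff.1 hy j with ⟨h0', h1'⟩
  have hd := sub_nonneg.2 (hxy j)
  rcases hs with ⟨hs0, hs1⟩
  simp only [Pi.add_apply, Pi.smul_apply, Pi.sub_apply, smul_eq_mul]
  constructor
  · nlinarith
  · nlinarith

lemma seg_le {x y : Fin n → ℝ} (hxy : x ≤ y) {s t : ℝ} (hs : 0 ≤ s) (hst : s ≤ t) :
    x + s • (y - x) ≤ x + t • (y - x) := by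
  intro j
  have hd := sub_nonneg.2 (hxy j)
  simp only [Pi.add_apply, Pi.smul_apply, Pi.sub_apply, smul_eq_mul]
  nlinarith

lemma seg_hasDeriv (hgrad : HasGradientOnBox F gradF) {x y : Fin n → ℝ}
    (hx : x ∈ Set.Icc (0 : Fin n → ℝ) 1) (hy : y ∈ Set.Icc (0 : Fin n → ℝ) 1) (hxy : x ≤ y) :
    ∀ s ∈ Set.Icc (0:ℝ) 1, HasDerivWithinAt (fun u : ℝ => F (x + u • (y - x)))
      (∑ i, gradF (x + s • (y - x)) i * (y i - x i)) (Set.Icc (0:ℝ) 1) s := by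
  intro s hs
  set φ : ℝ → Fin n → ℝ := fun u => x + u • (y - x) with hφ
  have hφd : HasDerivAt φ (y - x) s := by
    have h1 : HasDerivAt (fun u : ℝ => u • (y - x)) (y - x) s := by
      simpa using (hasDerivAt_id s).smul_const (y - x)
    simpa [hφ] using h1.const_add x
  have hmaps : Set.MapsTo φ (Set.Icc (0:ℝ) 1) (Set.Icc (0 : Fin n → ℝ) 1) :=
    fun u hu => seg_mem hx hy hxy hu
  have hFd : HasFDerivWithinAt F (gradCLM (gradF (φ s))) (Set.Icc 0 1) (φ s) :=
    hgrad (φ s) (seg_mem hx hy hxy hs)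
  have := hFd.comp_hasDerivWithinAt (x := s) hφd.hasDerivWithinAt hmaps
  rw [gradCLM_apply] at this; exact this

/-- Tangent line bound at the left endpoint: `F y - F x ≤ ⟨∇F(x), y - x⟩` for `x ≤ y`. -/
lemma tangent_left (hDR : DRSubmodular F) (hgrad : HasGradientOnBox F gradF)
    {x y : Fin n → ℝ} (hx : x ∈ Set.Icc (0 : Fin n → ℝ) 1)
    (hy : y ∈ Set.Icc (0 : Fin n → ℝ) 1) (hxy : x ≤ y) :
    F y - F x ≤ ∑ i, gradF x i * (y i - x i) := by
  set q : ℝ → ℝ := fun s => ∑ i, gradF (x + s • (y - x)) i * (y i - x i) with hq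
  have hg := seg_hasDeriv hgrad hx hy hxy
  have hq0 : q 0 = ∑ i, gradF x i * (y i - x i) := by simp [hq]
  set h : ℝ → ℝ := fun s => q 0 * s - F (x + s • (y - x)) with hh
  have hcont : ContinuousOn h (Set.Icc (0:ℝ) 1) :=
    ((continuous_const.mul continuous_id).continuousOn).sub
      (fun s hs => (hg s hs).continuousWithinAt)
  have hmono : MonotoneOn h (Set.Icc (0:ℝ) 1) := by
    apply monotoneOn_of_hasDerivWithinAt_nonneg (convex_Icc 0 1) hcont (f' := fun s => q 0 - q s)
    · rw [interior_Icc]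
      intro s hs
      have h1 : HasDerivWithinAt (fun u : ℝ => q 0 * u) (q 0) (Set.Ioo (0:ℝ) 1) s := by
        simpa using ((hasDerivAt_id s).const_mul (q 0)).hasDerivWithinAt
      exact h1.sub ((hg s (Set.Ioo_subset_Icc_self hs)).mono Set.Ioo_subset_Icc_self)
    · rw [interior_Icc]
      intro s hs
      have : q s ≤ q 0 := by
        have hx' : x + (0:ℝ) • (y - x) = x := by simp
        simp only [hq, hx']
        apply Finset.sum_le_sum
        intro i _
        have hgi : gradF (x + s • (y - x)) i ≤ gradF x i := by
          have hx' : x + (0:ℝ) • (y - x) = x := by simp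
          have := grad_antitone hDR hgrad hx (seg_mem hx hy hxy ⟨hs.1.le, hs.2.le⟩)
            (by simpa [hx'] using seg_le hxy (le_refl (0:ℝ)) hs.1.le) i
          exact this
        exact mul_le_mul_of_nonneg_right hgi (sub_nonneg.2 (hxy i))
      linarith
  have := hmono (Set.left_mem_Icc.2 zero_le_one) (Set.right_mem_Icc.2 zero_le_one) zero_le_one
  simp only [hh, mul_zero, mul_one, zero_smul, add_zero, one_smul, add_sub_cancel] at this
  rw [← hq0]
  linarith

/-- Tangent line bound at the right endpoint: `F x - F y ≤ ⟨∇F(y), x - y⟩` for `x ≤ y`. -/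
lemma tangent_right (hDR : DRSubmodular F) (hgrad : HasGradientOnBox F gradF)
    {x y : Fin n → ℝ} (hx : x ∈ Set.Icc (0 : Fin n → ℝ) 1)
    (hy : y ∈ Set.Icc (0 : Fin n → ℝ) 1) (hxy : x ≤ y) :
    F x - F y ≤ ∑ i, gradF y i * (x i - y i) := by
  set q : ℝ → ℝ := fun s => ∑ i, gradF (x + s • (y - x)) i * (y i - x i) with hq
  have hg := seg_hasDeriv hgrad hx hy hxy
  have hy1 : x + (1:ℝ) • (y - x) = y := by simp
  have hq1 : q 1 = ∑ i, gradF y i * (y i - x i) := by rw [hq]; simp only [hy1]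
  set h : ℝ → ℝ := fun s => F (x + s • (y - x)) - q 1 * s with hh
  have hcont : ContinuousOn h (Set.Icc (0:ℝ) 1) :=
    ContinuousOn.sub (fun s hs => (hg s hs).continuousWithinAt)
      ((continuous_const.mul continuous_id).continuousOn)
  have hmono : MonotoneOn h (Set.Icc (0:ℝ) 1) := by
    apply monotoneOn_of_hasDerivWithinAt_nonneg (convex_Icc 0 1) hcont (f' := fun s => q s - q 1)
    · rw [interior_Icc]
      intro s hs
      have h1 : HasDerivWithinAt (fun u : ℝ => q 1 * u) (q 1) (Set.Ioo (0:ℝ) 1) s := by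
        simpa using ((hasDerivAt_id s).const_mul (q 1)).hasDerivWithinAt
      exact ((hg s (Set.Ioo_subset_Icc_self hs)).mono Set.Ioo_subset_Icc_self).sub h1
    · rw [interior_Icc]
      intro s hs
      have : q 1 ≤ q s := by
        simp only [hq, hy1]
        apply Finset.sum_le_sum
        intro i _
        have hgi : gradF y i ≤ gradF (x + s • (y - x)) i := by
          have := grad_antitone hDR hgrad (seg_mem hx hy hxy ⟨hs.1.le, hs.2.le⟩) hy
            (by simpa [hy1] using seg_le hxy hs.1.le hs.2.le) i
          exact this
        exact mul_le_mul_of_nonneg_right hgi (sub_nonneg.2 (hxy i))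
      rw [hq1] at this ⊢
      linarith
  have := hmono (Set.left_mem_Icc.2 zero_le_one) (Set.right_mem_Icc.2 zero_le_one) zero_le_one
  simp only [hh, mul_zero, mul_one, zero_smul, add_zero, one_smul, add_sub_cancel] at this
  have hsum : ∑ i, gradF y i * (x i - y i) = -∑ i, gradF y i * (y i - x i) := by
    rw [← Finset.sum_neg_distrib]
    exact Finset.sum_congr rfl (fun i _ => by ring)
  rw [hsum, ← hq1]
  linarith

lemma sup_lower_bound (hFnonneg : ∀ z ∈ Set.Icc (0 : Fin n → ℝ) 1, 0 ≤ F z)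
    (hDR : DRSubmodular F) (hgrad : HasGradientOnBox F gradF)
    {x y : Fin n → ℝ} (hx : x ∈ Set.Icc (0 : Fin n → ℝ) 1)
    (hy : y ∈ Set.Icc (0 : Fin n → ℝ) 1) {θ : ℝ} (hθ0 : 0 ≤ θ) (hθ1 : θ ≤ 1)
    (hxθ : ∀ i, x i ≤ θ) :
    (1 - θ) * F y ≤ F (x ⊔ y) := by
  have hz : x ⊔ y ∈ Set.Icc (0 : Fin n → ℝ) 1 := by
    rw [mem_box_iff]; intro j
    rcases mem_box_iff.1 hx j with ⟨h0, h1⟩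
    rcases mem_box_iff.1 hy j with ⟨h0', h1'⟩
    exact ⟨le_trans h0 le_sup_left, sup_le h1 h1'⟩
  have hyz : y ≤ x ⊔ y := le_sup_right
  rcases eq_or_lt_of_le hθ0 with hθ | hθ
  · -- θ = 0 : x = 0 and x ⊔ y = y
    have hx0 : x = 0 := by
      funext j
      exact le_antisymm (by rw [← hθ] at hxθ; exact hxθ j) (mem_box_iff.1 hx j).1
    rw [hx0, sup_eq_right.2 (mem_box_iff.1 hy · |>.1 : (0 : Fin n → ℝ) ≤ y), ← hθ]
    norm_num
  rcases eq_or_lt_of_le hθ1 with hθ1' | hθ1'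
  · -- θ = 1
    rw [← hθ1']
    simpa using hFnonneg _ hz
  -- 0 < θ < 1
  set z := x ⊔ y with hzdef
  set w : Fin n → ℝ := y + (1/θ) • (z - y) with hwdef
  have hzy : ∀ j, 0 ≤ z j - y j := fun j => sub_nonneg.2 (hyz j)
  have hw : w ∈ Set.Icc (0 : Fin n → ℝ) 1 := by
    rw [mem_box_iff]; intro j
    rcases mem_box_iff.1 hx j with ⟨h0, h1⟩
    rcases mem_box_iff.1 hy j with ⟨h0', h1'⟩
    have hxj := hxθ j
    simp only [hwdef, Pi.add_apply, Pi.smul_apply, Pi.sub_apply, smul_eq_mul]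
    rcases le_total (x j) (y j) with hc | hc
    · have : z j = y j := sup_eq_right.2 hc
      rw [this]; constructor <;> simp [h0', h1']
    · have : z j = x j := sup_eq_left.2 hc
      rw [this]
      have hθinv : 1 ≤ 1/θ := by rw [le_div_iff₀ hθ]; linarith
      constructor
      · nlinarith
      · have hkey : 1/θ * (x j - y j) ≤ 1 - y j := by
          rw [div_mul_eq_mul_div, div_le_iff₀ hθ]; nlinarith
        linarith
  have hzw : z ≤ w := by
    intro j
    have hθinv : 1 ≤ 1/θ := by rw [le_div_iff₀ hθ]; linarith
    have : z j = y j + 1 * (z j - y j) := by ring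
    simp only [hwdef, Pi.add_apply, Pi.smul_apply, Pi.sub_apply, smul_eq_mul]
    nlinarith [hzy j]
  set S := ∑ i, gradF z i * (z i - y i) with hS
  have ha : F y - F z ≤ -S := by
    have := tangent_right hDR hgrad hy hz hyz
    have hrw : ∑ i, gradF z i * (y i - z i) = -S := by
      rw [hS, ← Finset.sum_neg_distrib]
      exact Finset.sum_congr rfl (fun i _ => by ring)
    linarith [hrw ▸ this]
  have hb : F w - F z ≤ (1/θ - 1) * S := by
    have := tangent_left hDR hgrad hz hw hzw
    have hrw : ∑ i, gradF z i * (w i - z i) = (1/θ - 1) * S := by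
      rw [hS, Finset.mul_sum]
      refine Finset.sum_congr rfl (fun i _ => ?_)
      simp only [hwdef, Pi.add_apply, Pi.smul_apply, Pi.sub_apply, smul_eq_mul]
      ring
    linarith [hrw ▸ this]
  have hFw : 0 ≤ F w := hFnonneg _ hw
  have hc : 0 < 1/θ - 1 := by
    have : 1 < 1/θ := by rw [lt_div_iff₀ hθ]; linarith
    linarith
  have hθne : θ ≠ 0 := ne_of_gt hθ
  -- combine: (1/θ-1)(Fy - Fz) + (Fw - Fz) ≤ 0, Fw ≥ 0
  have key : (1/θ - 1) * (F y - F z) - F z ≤ 0 := by nlinarith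
  have hFz : 0 ≤ F z := hFnonneg _ hz
  have key2 : (1 - θ) * (F y - F z) - θ * F z ≤ 0 := by
    calc (1 - θ) * (F y - F z) - θ * F z
        = θ * ((1/θ - 1) * (F y - F z) - F z) := by field_simp
      _ ≤ 0 := mul_nonpos_iff.2 (Or.inl ⟨hθ.le, key⟩)
  nlinarith [key2]

lemma harmonicNum_nonneg (j : ℕ) : 0 ≤ harmonicNum j :=
  Finset.sum_nonneg fun k _ => by positivity

lemma harmonicNum_mono : Monotone harmonicNum := fun a b h =>
  Finset.sum_le_sum_of_subset_of_nonneg (Finset.range_subset_range.2 h) (fun k _ _ => by positivity)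

lemma harmonicNum_pos {T : ℕ} (hT : 1 ≤ T) : 0 < harmonicNum T := by
  have : (1:ℝ) ≤ harmonicNum T := by
    have := harmonicNum_mono hT
    simpa [harmonicNum] using this
  linarith

lemma harmonicNum_succ (j : ℕ) : harmonicNum (j+1) = harmonicNum j + 1/((j:ℝ)+1) := by
  simp [harmonicNum, Finset.sum_range_succ]

section
variable {T j : ℕ}

lemma log_aux (hT : 1 ≤ T) (hj : j ≤ T) :
    Real.log (1 + harmonicNum j / harmonicNum T) < 1 := by
  have hpos := harmonicNum_pos hT
  have h2 : (1:ℝ) + harmonicNum j / harmonicNum T ≤ 2 := by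
    have : harmonicNum j / harmonicNum T ≤ 1 :=
      (div_le_one hpos).2 (harmonicNum_mono hj)
    linarith
  have h1 : (0:ℝ) < 1 + harmonicNum j / harmonicNum T := by
    have := div_nonneg (harmonicNum_nonneg j) hpos.le; linarith
  calc Real.log (1 + harmonicNum j / harmonicNum T) ≤ Real.log 2 := Real.log_le_log h1 h2
    _ < 1 := by have := Real.log_two_lt_d9; linarith

lemma one_div_one_add_fwTime (hT : 1 ≤ T) (hj : j ≤ T) :
    1 / (1 + fwTime T j) = 1 - Real.log (1 + harmonicNum j / harmonicNum T) := by
  have h := log_aux hT hj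
  have hc : (0:ℝ) < 1 - Real.log (1 + harmonicNum j / harmonicNum T) := by linarith
  unfold fwTime
  field_simp
  ring

lemma fwSqa_eq (hT : 1 ≤ T) (hj : j ≤ T) :
    fwSqa T j = 1 + harmonicNum j / harmonicNum T := by
  have h := log_aux hT hj
  have hc : (0:ℝ) < 1 - Real.log (1 + harmonicNum j / harmonicNum T) := by linarith
  have h1 : (0:ℝ) < 1 + harmonicNum j / harmonicNum T := by
    have := div_nonneg (harmonicNum_nonneg j) (harmonicNum_pos hT).le; linarith
  have key : fwTime T j / (1 + fwTime T j) = Real.log (1 + harmonicNum j / harmonicNum T) := by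
    have h2 : 1 + fwTime T j = 1 / (1 - Real.log (1 + harmonicNum j / harmonicNum T)) := by
      unfold fwTime; ring
    rw [h2, fwTime]
    field_simp
    ring
  rw [fwSqa, key, Real.exp_log h1]

lemma fwRatio_eq (hT : 1 ≤ T) (hj : j + 1 ≤ T) :
    fwRatio T j = fwSqa T j / fwSqa T (j+1) := by
  have e1 := one_div_one_add_fwTime hT (le_trans (Nat.le_succ j) hj)
  have e2 := one_div_one_add_fwTime hT hj
  have h1 : (0:ℝ) < 1 + harmonicNum j / harmonicNum T := by
    have := div_nonneg (harmonicNum_nonneg j) (harmonicNum_pos hT).le; linarith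
  have h2 : (0:ℝ) < 1 + harmonicNum (j+1) / harmonicNum T := by
    have := div_nonneg (harmonicNum_nonneg (j+1)) (harmonicNum_pos hT).le; linarith
  rw [fwRatio, e1, e2, fwSqa_eq hT (le_trans (Nat.le_succ j) hj), fwSqa_eq hT hj]
  rw [show -(1 - Real.log (1 + harmonicNum j / harmonicNum T)) +
      (1 - Real.log (1 + harmonicNum (j+1) / harmonicNum T)) =
      Real.log (1 + harmonicNum j / harmonicNum T) -
      Real.log (1 + harmonicNum (j+1) / harmonicNum T) by ring,
    Real.exp_sub, Real.exp_log h1, Real.exp_log h2]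

lemma fwSqa_one_le (hT : 1 ≤ T) (hj : j ≤ T) : 1 ≤ fwSqa T j := by
  rw [fwSqa_eq hT hj]
  have := div_nonneg (harmonicNum_nonneg j) (harmonicNum_pos hT).le; linarith

lemma fwSqa_lt (hT : 1 ≤ T) (hj : j + 1 ≤ T) : fwSqa T j < fwSqa T (j+1) := by
  rw [fwSqa_eq hT hj, fwSqa_eq hT (le_trans (Nat.le_succ j) hj), harmonicNum_succ]
  have hpos := harmonicNum_pos hT
  have : (0:ℝ) < 1/((j:ℝ)+1) := by positivity
  have h3 : 1/((j:ℝ)+1) / harmonicNum T > 0 := by positivity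
  have : (harmonicNum j + 1/((j:ℝ)+1)) / harmonicNum T
      = harmonicNum j / harmonicNum T + 1/((j:ℝ)+1)/harmonicNum T := by ring
  rw [this]; linarith
end


lemma fw_final_algebra (nL s s' A A' B M γ : ℝ) (hs1 : 1 ≤ s) (hss : s < s') (hnL : 0 ≤ nL)
    (hA0 : 0 ≤ A)
    (e1 : γ * s' = s' - s)
    (f1 : A + γ * M - nL/2 * γ^2 ≤ A')
    (f2 : (1/s) * B - 2 * A ≤ M)
    (f3 : s * A ≤ B) :
    s'^2 * A' - s' * B - (s^2 * A - s * B) ≥ -(nL/2) * (s' - s)^2 := by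
  have hspos : (0:ℝ) < s := by linarith
  have hs'pos : (0:ℝ) < s' := by linarith
  have hΔpos : (0:ℝ) < s' - s := by linarith
  have eγ1 : γ * s'^2 = (s' - s) * s' := by linear_combination s' * e1
  have eγ2 : γ^2 * s'^2 = (s' - s)^2 := by linear_combination (γ * s' + (s' - s)) * e1
  have step1 : s'^2 * A + (s' - s) * s' * M - (nL/2) * (s' - s)^2 ≤ s'^2 * A' := by
    have t1 := mul_le_mul_of_nonneg_left f1 (sq_nonneg s')
    have eq : s'^2 * A + (s' - s) * s' * M - (nL/2) * (s' - s)^2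
        = s'^2 * (A + γ * M - nL/2 * γ^2) := by
      linear_combination (-M) * eγ1 + (nL/2) * eγ2
    rw [eq]; exact t1
  have step2 : (s' - s) * s' * ((1/s) * B - 2 * A) ≤ (s' - s) * s' * M :=
    mul_le_mul_of_nonneg_left f2 (mul_nonneg hΔpos.le hs'pos.le)
  have step3 : (s' - s) * s' * ((1/s) * B) = (s' - s)^2 * (1/s) * B + (s' - s) * B := by
    field_simp; ring
  have step4 : (s' - s)^2 * (1/s) * (s * A) ≤ (s' - s)^2 * (1/s) * B :=
    mul_le_mul_of_nonneg_left f3 (mul_nonneg (sq_nonneg _) (one_div_pos.2 hspos).le)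
  have step5 : (s' - s)^2 * (1/s) * (s * A) = (s' - s)^2 * A := by field_simp
  nlinarith [step1, step2, step3, step4, step5]



set_option maxHeartbeats 1600000 in
/-- With the Lyapunov function `E(t_j) = a_{t_j} F(x(t_j)) - √a_{t_j} F(x*)`,
if `E(t_j) ≤ 0` then `E(t_{j+1}) - E(t_j) ≥ -(nL/2)(√a_{t_{j+1}} - √a_{t_j})²`. -/
theorem fw_lyapunov_increment_bound_of_nonpos
    (n : ℕ) (F : (Fin n → ℝ) → ℝ) (gradF : (Fin n → ℝ) → Fin n → ℝ)
    (L : ℝ) (hL : 0 ≤ L)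
    (hFnonneg : ∀ z ∈ Set.Icc (0 : Fin n → ℝ) 1, 0 ≤ F z)
    (hDR : DRSubmodular F)
    (hgrad : HasGradientOnBox F gradF)
    (hsmooth : ∀ z ∈ Set.Icc (0 : Fin n → ℝ) 1, ∀ w ∈ Set.Icc (0 : Fin n → ℝ) 1,
      |F w - F z - ∑ i, gradF z i * (w i - z i)| ≤ L / 2 * ∑ i, (w i - z i) ^ 2)
    (P : Set (Fin n → ℝ)) (hPsub : P ⊆ Set.Icc 0 1) (hPconv : Convex ℝ P)
    (h0P : (0 : Fin n → ℝ) ∈ P)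
    (xstar : Fin n → ℝ) (hxstarP : xstar ∈ P) (hxstarMax : ∀ z ∈ P, F z ≤ F xstar)
    (T : ℕ) (hT : 1 ≤ T)
    (x v : ℕ → Fin n → ℝ)
    (hx0 : x 0 = 0)
    (hvP : ∀ j < T, v j ∈ P)
    (hvmax : ∀ j < T, ∀ w ∈ P, ∑ i, gradF (x j) i * w i ≤ ∑ i, gradF (x j) i * v j i)
    (hstep : ∀ j < T, x (j + 1) = fwRatio T j • x j + (1 - fwRatio T j) • v j)
    (E : ℕ → ℝ)
    (hE : ∀ j, E j = fwSqa T j ^ 2 * F (x j) - fwSqa T j * F xstar) :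
    ∀ j < T, E j ≤ 0 →
      E (j + 1) - E j ≥ -((n : ℝ) * L / 2) * (fwSqa T (j + 1) - fwSqa T j) ^ 2 := by
  -- invariant: iterates are in P and coordinates bounded by 1 - 1/s_k
  have hinv : ∀ k, k ≤ T → x k ∈ P ∧ ∀ i, 1 ≤ fwSqa T k * (1 - x k i) := by
    intro k
    induction k with
    | zero =>
      intro _
      refine ⟨by rw [hx0]; exact h0P, fun i => ?_⟩
      rw [hx0]
      simpa using fwSqa_one_le hT (Nat.zero_le T)
    | succ k ih =>
      intro hk
      have hkT : k ≤ T := le_trans (Nat.le_succ k) hk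
      have hkt : k < T := lt_of_lt_of_le (Nat.lt_succ_self k) hk
      obtain ⟨hxkP, hxkB⟩ := ih hkT
      have hρk : fwRatio T k = fwSqa T k / fwSqa T (k+1) := fwRatio_eq hT hk
      have hsk : 1 ≤ fwSqa T k := fwSqa_one_le hT hkT
      have hsk' : fwSqa T k < fwSqa T (k+1) := fwSqa_lt hT hk
      have hs'pos : (0:ℝ) < fwSqa T (k+1) := by linarith
      have hρ0 : 0 ≤ fwRatio T k := by rw [hρk]; positivity
      have hρ1 : fwRatio T k ≤ 1 := by
        rw [hρk, div_le_one hs'pos]; linarith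
      constructor
      · rw [hstep k hkt]
        exact hPconv hxkP (hvP k hkt) hρ0 (by linarith) (by ring)
      · intro i
        rw [hstep k hkt]
        have hvB := mem_box_iff.1 (hPsub (hvP k hkt)) i
        have hxB := mem_box_iff.1 (hPsub hxkP) i
        simp only [Pi.add_apply, Pi.smul_apply, smul_eq_mul]
        have hρs : fwRatio T k * fwSqa T (k+1) = fwSqa T k := by
          rw [hρk]; field_simp
        have key : fwSqa T (k+1) * (1 - (fwRatio T k * x k i + (1 - fwRatio T k) * v k i))
            = fwSqa T k * (1 - x k i)
              + fwSqa T (k+1) * (1 - fwRatio T k) * (1 - v k i) := by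
          linear_combination (1 - x k i) * hρs
        have h2 : (0:ℝ) ≤ fwSqa T (k+1) * (1 - fwRatio T k) * (1 - v k i) :=
          mul_nonneg (mul_nonneg hs'pos.le (by linarith)) (by linarith [hvB.2])
        linarith [hxkB i, h2, key]
  intro j hj hEj
  have hjT : j ≤ T := le_of_lt hj
  have hj1T : j + 1 ≤ T := hj
  set s := fwSqa T j with hs_def
  set s' := fwSqa T (j+1) with hs'_def
  have hs1 : 1 ≤ s := fwSqa_one_le hT hjT
  have hss : s < s' := fwSqa_lt hT hj1T
  have hspos : (0:ℝ) < s := by linarith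
  have hs'pos : (0:ℝ) < s' := by linarith
  have hρ : fwRatio T j = s / s' := fwRatio_eq hT hj1T
  obtain ⟨hzP, hzB⟩ := hinv j hjT
  obtain ⟨hz'P, _⟩ := hinv (j+1) hj1T
  set z := x j with hz_def
  set z' := x (j+1) with hz'_def
  set w := v j with hw_def
  have hzbox : z ∈ Set.Icc (0 : Fin n → ℝ) 1 := hPsub hzP
  have hz'box : z' ∈ Set.Icc (0 : Fin n → ℝ) 1 := hPsub hz'P
  have hwbox : w ∈ Set.Icc (0 : Fin n → ℝ) 1 := hPsub (hvP j hj)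
  have hxsbox : xstar ∈ Set.Icc (0 : Fin n → ℝ) 1 := hPsub hxstarP
  set γ := 1 - fwRatio T j with hγ_def
  have e1 : γ * s' = s' - s := by
    rw [hγ_def, hρ]; field_simp
  have hγ0 : 0 ≤ γ := by
    rw [hγ_def, hρ]
    have : s / s' ≤ 1 := by rw [div_le_one hs'pos]; linarith
    linarith
  have hcoord : ∀ i, z' i - z i = γ * (w i - z i) := by
    intro i
    rw [hz'_def, hstep j hj]
    simp only [Pi.add_apply, Pi.smul_apply, smul_eq_mul, hγ_def]
    ring
  -- smoothness bound
  set M := ∑ i, gradF z i * (w i - z i) with hM_def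
  set A := F z with hA_def
  set A' := F z' with hA'_def
  set B := F xstar with hB_def
  have hsum1 : ∑ i, gradF z i * (z' i - z i) = γ * M := by
    rw [hM_def, Finset.mul_sum]
    exact Finset.sum_congr rfl fun i _ => by rw [hcoord i]; ring
  have hsum2 : ∑ i, (z' i - z i) ^ 2 ≤ (n : ℝ) * γ ^ 2 := by
    calc ∑ i, (z' i - z i) ^ 2 ≤ ∑ _i : Fin n, γ ^ 2 := by
          apply Finset.sum_le_sum
          intro i _
          rw [hcoord i]
          have h1 := mem_box_iff.1 hwbox i
          have h2 := mem_box_iff.1 hzbox i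
          have hwz : (w i - z i)^2 ≤ 1 := by nlinarith [h1.1, h1.2, h2.1, h2.2]
          nlinarith [mul_le_mul_of_nonneg_left hwz (sq_nonneg γ)]
      _ = (n : ℝ) * γ ^ 2 := by simp [Finset.sum_const, Finset.card_univ]
  have hsmZ := hsmooth z hzbox z' hz'box
  rw [hsum1] at hsmZ
  have f1 : A + γ * M - L/2 * ((n:ℝ) * γ^2) ≤ A' := by
    have h1 := (abs_le.1 hsmZ).1
    have h2 : L / 2 * ∑ i, (z' i - z i) ^ 2 ≤ L/2 * ((n:ℝ) * γ^2) :=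
      mul_le_mul_of_nonneg_left hsum2 (by linarith)
    rw [hA_def, hA'_def]
    linarith
  -- gradient bound via DR-submodularity
  have hsupbox : z ⊔ xstar ∈ Set.Icc (0 : Fin n → ℝ) 1 := by
    rw [mem_box_iff]; intro i
    rcases mem_box_iff.1 hzbox i with ⟨h0, h1⟩
    rcases mem_box_iff.1 hxsbox i with ⟨h0', h1'⟩
    exact ⟨le_trans h0 le_sup_left, sup_le h1 h1'⟩
  have hinfbox : z ⊓ xstar ∈ Set.Icc (0 : Fin n → ℝ) 1 := by
    rw [mem_box_iff]; intro i
    rcases mem_box_iff.1 hzbox i with ⟨h0, h1⟩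
    rcases mem_box_iff.1 hxsbox i with ⟨h0', h1'⟩
    exact ⟨le_inf h0 h0', le_trans inf_le_left h1⟩
  have htan1 : F (z ⊔ xstar) - A ≤ ∑ i, gradF z i * ((z ⊔ xstar) i - z i) :=
    tangent_left hDR hgrad hzbox hsupbox le_sup_left
  have htan2 : F (z ⊓ xstar) - A ≤ ∑ i, gradF z i * ((z ⊓ xstar) i - z i) :=
    tangent_right hDR hgrad hinfbox hzbox inf_le_left
  have hsplit : ∑ i, gradF z i * (xstar i - z i)
      = ∑ i, gradF z i * ((z ⊔ xstar) i - z i) + ∑ i, gradF z i * ((z ⊓ xstar) i - z i) := by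
    rw [← Finset.sum_add_distrib]
    refine Finset.sum_congr rfl fun i _ => ?_
    have : (z ⊔ xstar) i + (z ⊓ xstar) i = z i + xstar i := by
      simp only [Pi.sup_apply, Pi.inf_apply]
      rcases le_total (z i) (xstar i) with h | h
      · rw [sup_eq_right.2 h, inf_eq_left.2 h]; ring
      · rw [sup_eq_left.2 h, inf_eq_right.2 h]
    linear_combination (-1 : ℝ) * gradF z i * this
  have hMge : ∑ i, gradF z i * (xstar i - z i) ≤ M := by
    have h1 := hvmax j hj xstar hxstarP
    rw [hM_def]
    have e2 : ∑ i, gradF z i * (w i - z i)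
        = ∑ i, gradF z i * w i - ∑ i, gradF z i * z i := by
      rw [← Finset.sum_sub_distrib]
      exact Finset.sum_congr rfl fun i _ => by ring
    have e3 : ∑ i, gradF z i * (xstar i - z i)
        = ∑ i, gradF z i * xstar i - ∑ i, gradF z i * z i := by
      rw [← Finset.sum_sub_distrib]
      exact Finset.sum_congr rfl fun i _ => by ring
    rw [e2, e3]
    linarith
  -- the sup lower bound with θ = 1 - 1/s
  have hzcoord : ∀ i, z i ≤ 1 - 1/s := by
    intro i
    have h1 := hzB i
    rw [← hs_def] at h1
    have h2 : 1/s ≤ 1 - z i := by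
      rw [div_le_iff₀ hspos]; nlinarith
    linarith
  have hsup_lb : (1/s) * B ≤ F (z ⊔ xstar) := by
    have := sup_lower_bound hFnonneg hDR hgrad hzbox hxsbox
      (θ := 1 - 1/s) (by
        have : 1/s ≤ 1 := by rw [div_le_one hspos]; linarith
        linarith) (by have : 0 < 1/s := one_div_pos.2 hspos; linarith) hzcoord
    rw [hB_def]
    calc (1/s) * F xstar = (1 - (1 - 1/s)) * F xstar := by ring
      _ ≤ F (z ⊔ xstar) := this
  have hFinf : 0 ≤ F (z ⊓ xstar) := hFnonneg _ hinfbox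
  have f2 : (1/s) * B - 2 * A ≤ M := by
    rw [hsplit] at hMge
    linarith [htan1, htan2, hsup_lb, hFinf, hMge]
  -- E j ≤ 0 gives B ≥ s * A
  have f3 : s * A ≤ B := by
    rw [hE j, ← hs_def, ← hz_def, ← hA_def] at hEj
    have h2 : s * (s * A) ≤ s * B := by nlinarith [hEj]
    exact le_of_mul_le_mul_left h2 hspos
  have hA0 : 0 ≤ A := hFnonneg _ hzbox
  have hB0 : 0 ≤ B := hFnonneg _ hxsbox
  -- final algebra
  rw [hE (j+1), hE j, ← hs_def, ← hs'_def, ← hz_def, ← hz'_def, ← hA_def, ← hA'_def]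
  have f1' : A + γ * M - ((n:ℝ)*L)/2 * γ^2 ≤ A' := by
    have : L / 2 * ((n:ℝ) * γ^2) = ((n:ℝ)*L)/2 * γ^2 := by ring
    linarith [f1, this]
  have := fw_final_algebra ((n:ℝ)*L) s s' A A' B M γ hs1 hss
    (by positivity) hA0 e1 f1' f2 f3
  have hrw : -((n:ℝ) * L / 2) * (s' - s)^2 = -(((n:ℝ)*L)/2) * (s' - s)^2 := by ring
  linarith [this]
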